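/- Let n ≥ 1, let p ∈ ℝ^n satisfy 0 ≤ p_1 ≤ p_2 ≤ ⋯ ≤ p_n ≤ 1, and let g ∈ ℝ^n be arbitrary. Then γ̃²(p,g) ≥ 0. -/

import Mathlib

open Finset

private def eG (p : ℕ → ℝ) (k : ℕ) : ℝ := p k - (if k = 1 then 0 else p (k - 1))

private lemma sumE (p : ℕ → ℝ) : ∀ n : ℕ, 1 ≤ n →
    ∑ k ∈ Icc 1 n, eG p k = p n := by
  intro n hn
  induction n, hn using Nat.le_induction with
  | base => simp [eG]
  | succ n hn ih =>
    rw [Finset.sum_Icc_succ_top (by omega : 1 ≤ n + 1), ih]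
    have h1 : n + 1 ≠ 1 := by omega
    simp only [eG, h1, if_false, Nat.add_sub_cancel]
    ring

private lemma sumET (p g : ℕ → ℝ) : ∀ n : ℕ, 1 ≤ n →
    ∑ k ∈ Icc 1 n, eG p k * (∑ i ∈ Icc k n, g i)
      = ∑ i ∈ Icc 1 n, p i * g i := by
  intro n hn
  induction n, hn using Nat.le_induction with
  | base => simp [eG]
  | succ n hn ih =>
    have step : ∀ k ∈ Icc 1 (n + 1),
        eG p k * (∑ i ∈ Icc k (n + 1), g i)
          = eG p k * (∑ i ∈ Icc k n, g i) + eG p k * g (n + 1) := by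
      intro k hk
      rw [Finset.sum_Icc_succ_top (mem_Icc.mp hk).2]
      ring
    rw [Finset.sum_congr rfl step, Finset.sum_add_distrib, ← Finset.sum_mul,
        sumE p (n + 1) (by omega),
        Finset.sum_Icc_succ_top (by omega : 1 ≤ n + 1) (fun k => eG p k * (∑ i ∈ Icc k n, g i)),
        Finset.sum_Icc_succ_top (by omega : 1 ≤ n + 1) (fun i => p i * g i), ih]
    have hempty : Icc (n + 1) n = (∅ : Finset ℕ) := Icc_eq_empty (by omega)
    rw [hempty]
    simp

private lemma sumET2 (p g : ℕ → ℝ) : ∀ n : ℕ, 1 ≤ n →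
    ∑ k ∈ Icc 1 n, eG p k * (∑ i ∈ Icc k n, g i) ^ 2
      = (∑ i ∈ Icc 1 n, p i * g i ^ 2)
        + 2 * ∑ i ∈ Icc 1 n, ∑ j ∈ Icc (i + 1) n, p i * (g i * g j) := by
  intro n hn
  induction n, hn using Nat.le_induction with
  | base => simp [eG]
  | succ n hn ih =>
    have step : ∀ k ∈ Icc 1 (n + 1),
        eG p k * (∑ i ∈ Icc k (n + 1), g i) ^ 2
          = eG p k * (∑ i ∈ Icc k n, g i) ^ 2
            + 2 * g (n + 1) * (eG p k * (∑ i ∈ Icc k n, g i))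
            + g (n + 1) ^ 2 * eG p k := by
      intro k hk
      rw [Finset.sum_Icc_succ_top (mem_Icc.mp hk).2]
      ring
    rw [Finset.sum_congr rfl step, Finset.sum_add_distrib, Finset.sum_add_distrib,
        ← Finset.mul_sum, ← Finset.mul_sum, sumE p (n + 1) (by omega)]
    have hempty : Icc (n + 1) n = (∅ : Finset ℕ) := Icc_eq_empty (by omega)
    have h1 : ∑ k ∈ Icc 1 (n + 1), eG p k * (∑ i ∈ Icc k n, g i) ^ 2
        = ∑ k ∈ Icc 1 n, eG p k * (∑ i ∈ Icc k n, g i) ^ 2 := by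
      rw [Finset.sum_Icc_succ_top (by omega : 1 ≤ n + 1), hempty]
      simp
    have h2 : ∑ k ∈ Icc 1 (n + 1), eG p k * (∑ i ∈ Icc k n, g i)
        = ∑ i ∈ Icc 1 n, p i * g i := by
      rw [Finset.sum_Icc_succ_top (by omega : 1 ≤ n + 1), hempty]
      simp [sumET p g n hn]
    rw [h1, h2, ih]
    have hr1 : ∑ i ∈ Icc 1 (n + 1), p i * g i ^ 2
        = (∑ i ∈ Icc 1 n, p i * g i ^ 2) + p (n + 1) * g (n + 1) ^ 2 :=
      Finset.sum_Icc_succ_top (by omega) _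
    have hr2 : ∑ i ∈ Icc 1 (n + 1), ∑ j ∈ Icc (i + 1) (n + 1), p i * (g i * g j)
        = (∑ i ∈ Icc 1 n, ∑ j ∈ Icc (i + 1) n, p i * (g i * g j))
          + (∑ i ∈ Icc 1 n, p i * g i) * g (n + 1) := by
      rw [Finset.sum_Icc_succ_top (by omega : 1 ≤ n + 1)]
      have hemp2 : Icc (n + 1 + 1) (n + 1) = (∅ : Finset ℕ) := Icc_eq_empty (by omega)
      rw [hemp2]
      have inner : ∀ i ∈ Icc 1 n,
          ∑ j ∈ Icc (i + 1) (n + 1), p i * (g i * g j)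
            = (∑ j ∈ Icc (i + 1) n, p i * (g i * g j)) + p i * (g i * g (n + 1)) := by
        intro i hi
        have hi' : i ≤ n := (mem_Icc.mp hi).2
        rw [Finset.sum_Icc_succ_top (by omega : i + 1 ≤ n + 1)]
      rw [Finset.sum_congr rfl inner, Finset.sum_add_distrib]
      have hlast : ∑ i ∈ Icc 1 n, p i * (g i * g (n + 1))
          = (∑ i ∈ Icc 1 n, p i * g i) * g (n + 1) := by
        rw [Finset.sum_mul]
        exact Finset.sum_congr rfl (fun i _ => by ring)
      rw [hlast]
      simp
    rw [hr1, hr2]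
    ring

private lemma sq_sum_expand (f : ℕ → ℝ) : ∀ n : ℕ,
    (∑ i ∈ Icc 1 n, f i) ^ 2
      = (∑ i ∈ Icc 1 n, f i ^ 2)
        + 2 * ∑ i ∈ Icc 1 n, ∑ j ∈ Icc (i + 1) n, f i * f j := by
  intro n
  induction n with
  | zero => simp
  | succ n ih =>
    rw [Finset.sum_Icc_succ_top (by omega : 1 ≤ n + 1) f,
        Finset.sum_Icc_succ_top (by omega : 1 ≤ n + 1) (fun i => f i ^ 2),
        Finset.sum_Icc_succ_top (by omega : 1 ≤ n + 1)
          (fun i => ∑ j ∈ Icc (i + 1) (n + 1), f i * f j)]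
    have hemp : Icc (n + 1 + 1) (n + 1) = (∅ : Finset ℕ) := Icc_eq_empty (by omega)
    rw [hemp]
    have inner : ∀ i ∈ Icc 1 n,
        ∑ j ∈ Icc (i + 1) (n + 1), f i * f j
          = (∑ j ∈ Icc (i + 1) n, f i * f j) + f i * f (n + 1) := by
      intro i hi
      have hi' : i ≤ n := (mem_Icc.mp hi).2
      rw [Finset.sum_Icc_succ_top (by omega : i + 1 ≤ n + 1)]
    rw [Finset.sum_congr rfl inner, Finset.sum_add_distrib, ← Finset.sum_mul]
    rw [add_sq, ih]
    simp
    ring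

/-- Nonnegativity of the modified Gini-weighted smoothness: for `0 ≤ p₁ ≤ ⋯ ≤ pₙ ≤ 1`
and any `g ∈ ℝⁿ`, `γ̃²(p,g) ≥ 0`. -/
theorem modified_gini_nonneg (n : ℕ) (hn : 1 ≤ n) (p g : ℕ → ℝ)
    (hp1 : 0 ≤ p 1)
    (hmono : ∀ i, 1 ≤ i → i < n → p i ≤ p (i + 1))
    (hpn : p n ≤ 1) :
    0 ≤ (∑ i ∈ Finset.Icc 1 n, p i * (1 - p i) * (g i) ^ 2)
      + 2 * ∑ i ∈ Finset.Icc 1 n, ∑ j ∈ Finset.Icc (i + 1) n,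
          p i * (1 - p j) * (g i * g j) := by
  obtain ⟨M, hM⟩ : ∃ M : ℝ, M = ∑ i ∈ Icc 1 n, p i * g i := ⟨_, rfl⟩
  have split1 : ∑ i ∈ Icc 1 n, p i * (1 - p i) * (g i) ^ 2
      = (∑ i ∈ Icc 1 n, p i * g i ^ 2) - ∑ i ∈ Icc 1 n, (p i * g i) ^ 2 := by
    rw [← Finset.sum_sub_distrib]
    exact Finset.sum_congr rfl (fun i _ => by ring)
  have split2 : ∑ i ∈ Icc 1 n, ∑ j ∈ Icc (i + 1) n, p i * (1 - p j) * (g i * g j)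
      = (∑ i ∈ Icc 1 n, ∑ j ∈ Icc (i + 1) n, p i * (g i * g j))
        - ∑ i ∈ Icc 1 n, ∑ j ∈ Icc (i + 1) n, (p i * g i) * (p j * g j) := by
    rw [← Finset.sum_sub_distrib]
    refine Finset.sum_congr rfl (fun i _ => ?_)
    rw [← Finset.sum_sub_distrib]
    exact Finset.sum_congr rfl (fun j _ => by ring)
  have hB := sumET2 p g n hn
  have hMsq : M ^ 2 = (∑ i ∈ Icc 1 n, (p i * g i) ^ 2)
      + 2 * ∑ i ∈ Icc 1 n, ∑ j ∈ Icc (i + 1) n, (p i * g i) * (p j * g j) := by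
    rw [hM]
    exact sq_sum_expand (fun i => p i * g i) n
  have hE := sumE p n hn
  have hET : ∑ k ∈ Icc 1 n, eG p k * (∑ i ∈ Icc k n, g i) = M := by
    rw [hM]; exact sumET p g n hn
  have expand : ∑ k ∈ Icc 1 n, eG p k * ((∑ i ∈ Icc k n, g i) - M) ^ 2
      = ∑ k ∈ Icc 1 n, (eG p k * (∑ i ∈ Icc k n, g i) ^ 2
          - 2 * M * (eG p k * (∑ i ∈ Icc k n, g i)) + M ^ 2 * eG p k) :=
    Finset.sum_congr rfl (fun k _ => by ring)
  have key : ∑ k ∈ Icc 1 n, eG p k * ((∑ i ∈ Icc k n, g i) - M) ^ 2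
      = (∑ k ∈ Icc 1 n, eG p k * (∑ i ∈ Icc k n, g i) ^ 2)
        - 2 * M * M + M ^ 2 * p n := by
    rw [expand, Finset.sum_add_distrib, Finset.sum_sub_distrib,
        ← Finset.mul_sum (Icc 1 n) (fun k => eG p k * (∑ i ∈ Icc k n, g i)) (2 * M),
        ← Finset.mul_sum (Icc 1 n) (fun k => eG p k) (M ^ 2), hET, hE]
  have nonneg1 : 0 ≤ ∑ k ∈ Icc 1 n, eG p k * ((∑ i ∈ Icc k n, g i) - M) ^ 2 := by
    refine Finset.sum_nonneg (fun k hk => ?_)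
    have hk' := mem_Icc.mp hk
    have he : 0 ≤ eG p k := by
      unfold eG
      by_cases h : k = 1
      · simpa [h] using hp1
      · simp only [h, if_false]
        have := hmono (k - 1) (by omega) (by omega)
        have hk1 : k - 1 + 1 = k := by omega
        rw [hk1] at this
        linarith
    exact mul_nonneg he (sq_nonneg _)
  have hpn' : p n * M ^ 2 ≤ M ^ 2 := by nlinarith [sq_nonneg M]
  rw [split1, split2]
  nlinarith [key, hB, hMsq, nonneg1, hpn', sq_nonneg M]
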